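/- Let J, K be disjoint intervals with 2J ∩ K = ∅ (so K lies outside the double of J), let σ, ω be locally finite positive Borel measures with ω(J_±) > 0. Then the Haar coefficient of the Hilbert transform satisfies the two-sided monotonicity estimate: |⟨H(1_K σ), h_J^ω⟩_ω| ≈ (P(J, 1_K σ)/ℓ(J)) · |⟨Z, h_J^ω⟩_ω|, where Z(x) = x, h_J^ω is the L²(ω)-normalized Haar function of J, P(J,ν) = ∫ ℓ(J)/(ℓ(J)+|y−c_J|)² dν(y), and the implicit constants are absolute. -/

import Mathlib

open MeasureTheory Set
open scoped ENNReal

/-- The dyadic interval `[k·2ⁿ, (k+1)·2ⁿ)`. -/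
def dyadicInterval (n k : ℤ) : Set ℝ :=
  Set.Ico ((k : ℝ) * 2 ^ n) (((k : ℝ) + 1) * 2 ^ n)

/-- The Poisson integral `P(J,ν) = ∫ ℓ/(ℓ+|t−c|)² dν(t)` of a measure `ν`, for an
interval with center `c` and length `ℓ`. -/
noncomputable def poissonIntegral (c ℓ : ℝ) (ν : Measure ℝ) : ℝ :=
  ∫ t, ℓ / (ℓ + |t - c|) ^ 2 ∂ν

/-- The `L²(ω)`-normalized Haar function of the dyadic interval indexed by `(n,k)`:
`h_J^ω = (1/√ω(J))·(√(ω(J_−)/ω(J_+))·1_{J_+} − √(ω(J_+)/ω(J_−))·1_{J_−})`. -/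
noncomputable def haarFn (ω : Measure ℝ) (n k : ℤ) (x : ℝ) : ℝ :=
  (Real.sqrt (ω (dyadicInterval n k)).toReal)⁻¹ *
    (Real.sqrt ((ω (dyadicInterval (n - 1) (2 * k))).toReal /
        (ω (dyadicInterval (n - 1) (2 * k + 1))).toReal) *
        (dyadicInterval (n - 1) (2 * k + 1)).indicator (fun _ => (1 : ℝ)) x -
      Real.sqrt ((ω (dyadicInterval (n - 1) (2 * k + 1))).toReal /
        (ω (dyadicInterval (n - 1) (2 * k))).toReal) *
        (dyadicInterval (n - 1) (2 * k)).indicator (fun _ => (1 : ℝ)) x)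

lemma key_bounds {L c x t : ℝ} (hL : 0 < L) (hx : |x - c| ≤ L / 2) (ht : L < |t - c|) :
    (2/3) * ((L + |t - c|) ^ 2)⁻¹ ≤ ((t - x) * (t - c))⁻¹ ∧
    ((t - x) * (t - c))⁻¹ ≤ 8 * ((L + |t - c|) ^ 2)⁻¹ := by
  have hane : 0 < |t - c| := hL.trans ht
  have habs := abs_le.1 hx
  have hprod_lb : (1/2) * (t - c) ^ 2 ≤ (t - x) * (t - c) := by
    rcases abs_cases (t - c) with ⟨h1, h2⟩ | ⟨h1, h2⟩ <;> nlinarith [h1 ▸ ht]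
  have hprod_ub : (t - x) * (t - c) ≤ (3/2) * (t - c) ^ 2 := by
    rcases abs_cases (t - c) with ⟨h1, h2⟩ | ⟨h1, h2⟩ <;> nlinarith [h1 ▸ ht]
  have hpos : 0 < (t - x) * (t - c) := by
    nlinarith [mul_pos hane hane, sq_abs (t - c)]
  have hs : 0 < (L + |t - c|) ^ 2 := by positivity
  have h1 : (t - c) ^ 2 ≤ (L + |t - c|) ^ 2 := by nlinarith [abs_nonneg (t - c), sq_abs (t - c)]
  have h2 : (L + |t - c|) ^ 2 ≤ 4 * (t - c) ^ 2 := by nlinarith [sq_abs (t - c)]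
  have e2 : ((t-x)*(t-c))⁻¹ = 1/((t-x)*(t-c)) := (one_div _).symm
  constructor
  · rw [show (2/3 : ℝ) * ((L + |t-c|)^2)⁻¹ = (2/3)/((L+|t-c|)^2) from (div_eq_mul_inv _ _).symm,
      e2, div_le_div_iff₀ hs hpos]
    nlinarith
  · rw [show (8 : ℝ) * ((L + |t-c|)^2)⁻¹ = 8/((L+|t-c|)^2) from (div_eq_mul_inv _ _).symm,
      e2, div_le_div_iff₀ hpos hs]
    nlinarith

lemma Ico_meas_lt (μ : Measure ℝ) [IsLocallyFiniteMeasure μ] (a b : ℝ) :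
    μ (Set.Ico a b) < ⊤ :=
  (measure_mono Set.Ico_subset_Icc_self).trans_lt isCompact_Icc.measure_lt_top

lemma dyadic_meas_lt (μ : Measure ℝ) [IsLocallyFiniteMeasure μ] (n k : ℤ) :
    μ (dyadicInterval n k) < ⊤ := Ico_meas_lt μ _ _

lemma integrable_restrict_of_bdd (μ : Measure ℝ) {s : Set ℝ} (hs : MeasurableSet s)
    (hμ : μ s ≠ ⊤) {f : ℝ → ℝ} (hf : AEStronglyMeasurable f (μ.restrict s)) (M : ℝ)
    (hb : ∀ x ∈ s, |f x| ≤ M) : Integrable f (μ.restrict s) := by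
  haveI : IsFiniteMeasure (μ.restrict s) :=
    ⟨by rwa [Measure.restrict_apply_univ, lt_top_iff_ne_top]⟩
  apply Integrable.mono' (integrable_const M) hf
  exact (ae_restrict_iff' hs).2 (ae_of_all _ (by simpa [Real.norm_eq_abs] using hb))

lemma integrable_of_support (μ : Measure ℝ) {s : Set ℝ} (hs : MeasurableSet s)
    (hμ : μ s ≠ ⊤) {f : ℝ → ℝ} (hf : Measurable f) (M : ℝ)
    (h0 : ∀ x ∉ s, f x = 0) (hb : ∀ x ∈ s, |f x| ≤ M) : Integrable f μ := by
  have hfi : f = s.indicator f := by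
    funext x
    by_cases hx : x ∈ s
    · simp [hx]
    · simp [hx, h0 x hx]
  rw [hfi, integrable_indicator_iff hs]
  exact integrable_restrict_of_bdd μ hs hμ hf.aestronglyMeasurable.restrict M hb

lemma main_aux (σ ω : Measure ℝ) [IsLocallyFiniteMeasure σ] [IsLocallyFiniteMeasure ω]
    (cJ L : ℝ) (hL : 0 < L) (K : Set ℝ)
    (hK : MeasurableSet K) (hKfin : σ K ≠ ⊤)
    (hdisjK : ∀ t ∈ K, L < |t - cJ|)
    (a b : ℝ) (ha : 0 ≤ a) (hb : 0 ≤ b)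
    (hab : a * (ω (Ico cJ (cJ + L/2))).toReal = b * (ω (Ico (cJ - L/2) cJ)).toReal)
    (h : ℝ → ℝ)
    (hdef : ∀ x, h x = a * (Ico cJ (cJ + L/2)).indicator (fun _ => (1:ℝ)) x
                      - b * (Ico (cJ - L/2) cJ).indicator (fun _ => (1:ℝ)) x) :
    (2/3) * (poissonIntegral cJ L (σ.restrict K) / L) * |∫ x, x * h x ∂ω|
      ≤ |∫ x, (∫ t in K, (t - x)⁻¹ ∂σ) * h x ∂ω| ∧
    |∫ x, (∫ t in K, (t - x)⁻¹ ∂σ) * h x ∂ω|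
      ≤ 8 * (poissonIntegral cJ L (σ.restrict K) / L) * |∫ x, x * h x ∂ω| := by
  haveI : IsFiniteMeasure (σ.restrict K) :=
    ⟨by rwa [Measure.restrict_apply_univ, lt_top_iff_ne_top]⟩
  set Jm : Set ℝ := Ico (cJ - L/2) cJ with hJm
  set Jp : Set ℝ := Ico cJ (cJ + L/2) with hJp
  set J : Set ℝ := Ico (cJ - L/2) (cJ + L/2) with hJ
  have hJmeas : MeasurableSet J := measurableSet_Ico
  have hJfin : ω J ≠ ⊤ := (Ico_meas_lt ω _ _).ne
  -- support and sign of h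
  have hsupp : ∀ x, x ∉ J → h x = 0 := by
    intro x hx
    have hxm : x ∉ Jm := fun hc => hx ⟨hc.1, hc.2.trans (by linarith)⟩
    have hxp : x ∉ Jp := fun hc => hx ⟨by linarith [hc.1], hc.2⟩
    rw [hdef x, indicator_of_notMem hxp, indicator_of_notMem hxm]
    ring
  have hvalp : ∀ x ∈ Jp, h x = a := by
    intro x hx
    have hxm : x ∉ Jm := fun hc => absurd hc.2 (not_lt.2 hx.1)
    rw [hdef x, indicator_of_mem hx, indicator_of_notMem hxm]
    ring
  have hvalm : ∀ x ∈ Jm, h x = -b := by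
    intro x hx
    have hxp : x ∉ Jp := fun hc => absurd hc.1 (not_le.2 hx.2)
    rw [hdef x, indicator_of_mem hx, indicator_of_notMem hxp]
    ring
  have hsign : ∀ x, 0 ≤ (x - cJ) * h x := by
    intro x
    by_cases hx : x ∈ J
    · by_cases hxp : x ∈ Jp
      · rw [hvalp x hxp]
        have : cJ ≤ x := hxp.1
        exact mul_nonneg (by linarith) ha
      · have hxm : x ∈ Jm := ⟨hx.1, lt_of_not_ge fun hc => hxp ⟨hc, hx.2⟩⟩
        rw [hvalm x hxm]
        have : x < cJ := hxm.2
        nlinarith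
    · rw [hsupp x hx]; ring_nf; rfl
  have hxJ : ∀ x ∈ J, |x - cJ| ≤ L / 2 := by
    intro x hx
    rw [abs_le]
    constructor <;> [linarith [hx.1]; linarith [hx.2]]
  have hmeash : Measurable h := by
    have : h = fun x => a * Jp.indicator (fun _ => (1:ℝ)) x - b * Jm.indicator (fun _ => (1:ℝ)) x :=
      funext hdef
    rw [this]
    exact ((measurable_const.indicator measurableSet_Ico).const_mul a).sub
      ((measurable_const.indicator measurableSet_Ico).const_mul b)
  have hboundh : ∀ x, |h x| ≤ a + b := by
    intro x
    by_cases hx : x ∈ J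
    · by_cases hxp : x ∈ Jp
      · rw [hvalp x hxp, abs_of_nonneg ha]; linarith
      · have hxm : x ∈ Jm := ⟨hx.1, lt_of_not_ge fun hc => hxp ⟨hc, hx.2⟩⟩
        rw [hvalm x hxm, abs_neg, abs_of_nonneg hb]; linarith
    · rw [hsupp x hx]; simpa using by positivity
  -- the comparison kernel integrals
  set Q : ℝ := ∫ t in K, ((L + |t - cJ|) ^ 2)⁻¹ ∂σ with hQ
  have hQnn : 0 ≤ Q := by
    apply setIntegral_nonneg hK
    intro t _
    positivity
  have hPoisson : poissonIntegral cJ L (σ.restrict K) / L = Q := by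
    rw [poissonIntegral, hQ]
    simp only [div_eq_mul_inv]
    rw [integral_const_mul]
    field_simp
  -- the parametric kernel integral
  set g : ℝ → ℝ := fun x => ∫ t in K, ((t - x) * (t - cJ))⁻¹ ∂σ with hg
  have hmeasg : Measurable g := by
    have hm : StronglyMeasurable
        (Function.uncurry fun (x t : ℝ) => ((t - x) * (t - cJ))⁻¹) := by
      apply Measurable.stronglyMeasurable
      apply Measurable.inv
      fun_prop
    exact hm.integral_prod_right.measurable
  have hintu : Integrable (fun t => ((L + |t - cJ|) ^ 2)⁻¹) (σ.restrict K) := by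
    apply integrable_restrict_of_bdd σ hK hKfin
      (Measurable.aestronglyMeasurable (by fun_prop)) ((L^2)⁻¹)
    intro t _
    rw [abs_of_nonneg (by positivity)]
    apply inv_anti₀ (by positivity)
    nlinarith [abs_nonneg (t - cJ), hL]
  have hintv : ∀ x ∈ J, Integrable (fun t => ((t - x) * (t - cJ))⁻¹) (σ.restrict K) := by
    intro x hx
    apply integrable_restrict_of_bdd σ hK hKfin
      (Measurable.aestronglyMeasurable (by apply Measurable.inv; fun_prop)) (8 * (L^2)⁻¹)
    intro t ht
    have hkb := key_bounds hL (hxJ x hx) (hdisjK t ht)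
    have h0 : 0 < (2/3) * ((L + |t - cJ|) ^ 2)⁻¹ := by positivity
    rw [abs_of_nonneg (by linarith [hkb.1])]
    refine hkb.2.trans ?_
    have : ((L + |t - cJ|) ^ 2)⁻¹ ≤ (L^2)⁻¹ := by
      apply inv_anti₀ (by positivity)
      nlinarith [abs_nonneg (t - cJ), hL]
    linarith
  have hgbounds : ∀ x ∈ J, (2/3) * Q ≤ g x ∧ g x ≤ 8 * Q := by
    intro x hx
    constructor
    · rw [hg, hQ, ← integral_const_mul]
      apply setIntegral_mono_on (hintu.const_mul _) (hintv x hx) hK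
      intro t ht
      exact (key_bounds hL (hxJ x hx) (hdisjK t ht)).1
    · rw [hg, hQ, ← integral_const_mul]
      apply setIntegral_mono_on (hintv x hx) (hintu.const_mul _) hK
      intro t ht
      exact (key_bounds hL (hxJ x hx) (hdisjK t ht)).2
  have hgnn : ∀ x ∈ J, 0 ≤ g x := fun x hx => le_trans (by positivity) (hgbounds x hx).1
  -- integrability of t ↦ (t - x)⁻¹ on K, for x ∈ J
  have htx : ∀ x ∈ J, ∀ t ∈ K, L / 2 < |t - x| ∧ t - x ≠ 0 ∧ t - cJ ≠ 0 := by
    intro x hx t ht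
    have h1 : t - cJ - (x - cJ) = t - x := by ring
    have h2 := abs_sub_abs_le_abs_sub (t - cJ) (x - cJ)
    rw [h1] at h2
    have h3 : L / 2 < |t - x| := by linarith [hdisjK t ht, hxJ x hx]
    refine ⟨h3, ?_, ?_⟩
    · intro hc; rw [hc] at h3; simp at h3; linarith
    · intro hc
      have := hdisjK t ht
      rw [hc] at this; simp at this; linarith
  have hcJJ : cJ ∈ J := by
    constructor <;> simp <;> linarith
  have hintF : ∀ x ∈ J, Integrable (fun t => (t - x)⁻¹) (σ.restrict K) := by
    intro x hx
    apply integrable_restrict_of_bdd σ hK hKfin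
      (Measurable.aestronglyMeasurable (by apply Measurable.inv; fun_prop)) ((L/2)⁻¹)
    intro t ht
    rw [abs_inv]
    exact inv_anti₀ (by positivity) (htx x hx t ht).1.le
  -- F x = (x - cJ) * g x + F cJ on J
  set F : ℝ → ℝ := fun x => ∫ t in K, (t - x)⁻¹ ∂σ with hF
  have hFsub : ∀ x ∈ J, F x = (x - cJ) * g x + F cJ := by
    intro x hx
    have e1 : F x - F cJ = ∫ t in K, ((t - x)⁻¹ - (t - cJ)⁻¹) ∂σ :=
      (integral_sub (hintF x hx) (hintF cJ hcJJ)).symm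
    have e2 : ∫ t in K, ((t - x)⁻¹ - (t - cJ)⁻¹) ∂σ
        = ∫ t in K, (x - cJ) * ((t - x) * (t - cJ))⁻¹ ∂σ := by
      apply setIntegral_congr_fun hK
      intro t ht
      obtain ⟨-, hne1, hne2⟩ := htx x hx t ht
      field_simp
      ring
    have e3 : ∫ t in K, (x - cJ) * ((t - x) * (t - cJ))⁻¹ ∂σ = (x - cJ) * g x := by
      rw [hg, integral_const_mul]
    linarith [e1, e2 ▸ e1, e3]
  -- rewrite the main integrand
  have hcore : (fun x => F x * h x)
      = fun x => (x - cJ) * (g x * h x) + F cJ * h x := by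
    funext x
    by_cases hx : x ∈ J
    · rw [hFsub x hx]; ring
    · rw [hsupp x hx]; ring
  -- integrability of all pieces
  have hinth : Integrable h ω := by
    apply integrable_of_support ω hJmeas hJfin hmeash (a + b) hsupp
    intro x _
    exact hboundh x
  have hintZ : Integrable (fun x => (x - cJ) * h x) ω := by
    apply integrable_of_support ω hJmeas hJfin (f := fun x => (x - cJ) * h x) ((measurable_id.sub measurable_const).mul hmeash) ((L/2) * (a + b))
    · intro x hx; rw [hsupp x hx]; ring
    · intro x hx
      rw [abs_mul]
      exact mul_le_mul (hxJ x hx) (hboundh x) (abs_nonneg _) (by linarith)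
  have hintxh : Integrable (fun x => x * h x) ω := by
    apply integrable_of_support ω hJmeas hJfin (f := fun x => x * h x) (measurable_id'.mul hmeash) ((|cJ| + L) * (a + b))
    · intro x hx; rw [hsupp x hx]; ring
    · intro x hx
      rw [abs_mul]
      apply mul_le_mul ?_ (hboundh x) (abs_nonneg _) (by positivity)
      have := hxJ x hx
      have h4 : |x| - |cJ| ≤ |x - cJ| := by
        have := abs_sub_abs_le_abs_sub x cJ; linarith
      linarith
  have hintG : Integrable (fun x => (x - cJ) * (g x * h x)) ω := by
    apply integrable_of_support ω hJmeas hJfin (f := fun x => (x - cJ) * (g x * h x)) ((measurable_id.sub measurable_const).mul (hmeasg.mul hmeash)) ((L/2) * (8 * Q * (a + b)))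
    · intro x hx; rw [hsupp x hx]; ring
    · intro x hx
      rw [abs_mul]
      apply mul_le_mul (hxJ x hx) ?_ (abs_nonneg _) (by linarith)
      rw [abs_mul]
      apply mul_le_mul ?_ (hboundh x) (abs_nonneg _) (by positivity)
      rw [abs_of_nonneg (hgnn x hx)]
      exact (hgbounds x hx).2
  -- ∫ h = 0
  have hinth0 : ∫ x, h x ∂ω = 0 := by
    have e : ∫ x, h x ∂ω = ∫ x, (a * Jp.indicator (fun _ => (1:ℝ)) x
        - b * Jm.indicator (fun _ => (1:ℝ)) x) ∂ω := by
      apply integral_congr_ae (ae_of_all _ hdef)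
    have hip : Integrable (Jp.indicator (fun _ => (1:ℝ))) ω := by
      rw [integrable_indicator_iff measurableSet_Ico]
      exact integrableOn_const (Ico_meas_lt ω _ _).ne
    have him : Integrable (Jm.indicator (fun _ => (1:ℝ))) ω := by
      rw [integrable_indicator_iff measurableSet_Ico]
      exact integrableOn_const (Ico_meas_lt ω _ _).ne
    rw [e, integral_sub (hip.const_mul a) (him.const_mul b),
      integral_const_mul, integral_const_mul,
      integral_indicator measurableSet_Ico, integral_indicator measurableSet_Ico]
    simp only [integral_const, Measure.real, Measure.restrict_apply_univ, smul_eq_mul, mul_one]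
    linarith [hab]
  -- A = ∫ (x - cJ) h dω, equals ∫ x h dω
  set A : ℝ := ∫ x, (x - cJ) * h x ∂ω with hA
  have hAnn : 0 ≤ A := integral_nonneg hsign
  have hxhA : ∫ x, x * h x ∂ω = A := by
    have e : (fun x => x * h x) = fun x => (x - cJ) * h x + cJ * h x := by
      funext x; ring
    rw [e, integral_add hintZ (hinth.const_mul cJ), integral_const_mul,
      hinth0, mul_zero, add_zero, hA]
  -- the central identity
  have hIG : ∫ x, F x * h x ∂ω = ∫ x, (x - cJ) * (g x * h x) ∂ω := by
    rw [hcore, integral_add hintG (hinth.const_mul (F cJ)),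
      integral_const_mul, hinth0, mul_zero, add_zero]
  set G : ℝ := ∫ x, (x - cJ) * (g x * h x) ∂ω with hG
  have hlow : (2/3 * Q) * A ≤ G := by
    rw [hG, hA, ← integral_const_mul]
    apply integral_mono (hintZ.const_mul _) hintG
    intro x
    dsimp only
    by_cases hx : x ∈ J
    · have e : (x - cJ) * (g x * h x) = g x * ((x - cJ) * h x) := by ring
      rw [e, show (2/3 * Q) * ((x - cJ) * h x) = (2/3 * Q) * ((x - cJ) * h x) from rfl]
      exact mul_le_mul_of_nonneg_right (hgbounds x hx).1 (hsign x)
    · rw [hsupp x hx]; simp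
  have hhigh : G ≤ (8 * Q) * A := by
    rw [hG, hA, ← integral_const_mul]
    apply integral_mono hintG (hintZ.const_mul _)
    intro x
    dsimp only
    by_cases hx : x ∈ J
    · have e : (x - cJ) * (g x * h x) = g x * ((x - cJ) * h x) := by ring
      rw [e]
      exact mul_le_mul_of_nonneg_right (hgbounds x hx).2 (hsign x)
    · rw [hsupp x hx]; simp
  have hGnn : 0 ≤ G := le_trans (by positivity) hlow
  rw [hPoisson, hxhA, abs_of_nonneg hAnn]
  have : |∫ x, F x * h x ∂ω| = G := by rw [hIG, abs_of_nonneg hGnn]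
  rw [hF] at this
  rw [this]
  constructor <;> nlinarith [hlow, hhigh]

lemma sqrt_balance {s P Q : ℝ} (hP : 0 < P) (hQ : 0 < Q) :
    (s * Real.sqrt (P / Q)) * Q = (s * Real.sqrt (Q / P)) * P := by
  rw [Real.sqrt_div hP.le, Real.sqrt_div hQ.le]
  have e1 := Real.mul_self_sqrt hP.le
  have e2 := Real.mul_self_sqrt hQ.le
  have h1 : Real.sqrt P ≠ 0 := (Real.sqrt_pos.2 hP).ne'
  have h2 : Real.sqrt Q ≠ 0 := (Real.sqrt_pos.2 hQ).ne'
  field_simp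
  linear_combination (s * Q) * e1 - (s * P) * e2

lemma dyadic_child_left (n k : ℤ) :
    dyadicInterval (n-1) (2*k)
      = Ico (((k:ℝ) + 1/2) * 2^n - (2:ℝ)^n / 2) (((k:ℝ) + 1/2) * 2^n) := by
  have h2 : (2:ℝ)^(n-1) = 2^n/2 := by
    rw [zpow_sub₀ (by norm_num : (2:ℝ) ≠ 0), zpow_one]
  unfold dyadicInterval
  push_cast
  rw [h2]
  congr 1 <;> ring

lemma dyadic_child_right (n k : ℤ) :
    dyadicInterval (n-1) (2*k+1)
      = Ico (((k:ℝ) + 1/2) * 2^n) (((k:ℝ) + 1/2) * 2^n + (2:ℝ)^n / 2) := by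
  have h2 : (2:ℝ)^(n-1) = 2^n/2 := by
    rw [zpow_sub₀ (by norm_num : (2:ℝ) ≠ 0), zpow_one]
  unfold dyadicInterval
  push_cast
  rw [h2]
  congr 1 <;> ring

lemma haar_decomp (ω : Measure ℝ) (n k : ℤ) (x : ℝ) :
    haarFn ω n k x
      = ((Real.sqrt (ω (dyadicInterval n k)).toReal)⁻¹ *
          Real.sqrt ((ω (dyadicInterval (n-1) (2*k))).toReal /
            (ω (dyadicInterval (n-1) (2*k+1))).toReal)) *
          (dyadicInterval (n-1) (2*k+1)).indicator (fun _ => (1:ℝ)) x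
        - ((Real.sqrt (ω (dyadicInterval n k)).toReal)⁻¹ *
          Real.sqrt ((ω (dyadicInterval (n-1) (2*k+1))).toReal /
            (ω (dyadicInterval (n-1) (2*k))).toReal)) *
          (dyadicInterval (n-1) (2*k)).indicator (fun _ => (1:ℝ)) x := by
  unfold haarFn; ring

/-- Monotonicity principle for the Hilbert transform: if `J` (indexed by `(n,k)`,
with center `c_J` and length `ℓ(J) = 2ⁿ`) and `K` (indexed by `(m,j)`) are dyadic
intervals with `K` disjoint from the double `2J`, and both children of `J` have
positive `ω`-measure, then with absolute constants `c, C`,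
`c (P(J,1_Kσ)/ℓ(J)) |⟨Z,h_J^ω⟩_ω| ≤ |⟨H(1_Kσ),h_J^ω⟩_ω| ≤ C (P(J,1_Kσ)/ℓ(J)) |⟨Z,h_J^ω⟩_ω|`. -/
theorem stmt19 :
    ∃ c C : ℝ, 0 < c ∧ 0 < C ∧
      ∀ (σ ω : Measure ℝ), IsLocallyFiniteMeasure σ → IsLocallyFiniteMeasure ω →
        ∀ n k m j : ℤ,
          0 < ω (dyadicInterval (n - 1) (2 * k)) →
          0 < ω (dyadicInterval (n - 1) (2 * k + 1)) →
          Disjoint (dyadicInterval m j)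
            (Set.Icc ((((k : ℝ) + 1 / 2) * 2 ^ n) - 2 ^ n)
              ((((k : ℝ) + 1 / 2) * 2 ^ n) + 2 ^ n)) →
          c * (poissonIntegral (((k : ℝ) + 1 / 2) * 2 ^ n) ((2 : ℝ) ^ n)
                  (σ.restrict (dyadicInterval m j)) / (2 : ℝ) ^ n) *
              |∫ x, x * haarFn ω n k x ∂ω|
            ≤ |∫ x, (∫ t in dyadicInterval m j, (t - x)⁻¹ ∂σ) * haarFn ω n k x ∂ω| ∧
          |∫ x, (∫ t in dyadicInterval m j, (t - x)⁻¹ ∂σ) * haarFn ω n k x ∂ω|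
            ≤ C * (poissonIntegral (((k : ℝ) + 1 / 2) * 2 ^ n) ((2 : ℝ) ^ n)
                  (σ.restrict (dyadicInterval m j)) / (2 : ℝ) ^ n) *
                |∫ x, x * haarFn ω n k x ∂ω| := by

  refine ⟨2/3, 8, by norm_num, by norm_num, ?_⟩
  intro σ ω hσ hω n k m j hm0 hp0 hdisj
  haveI := hσ; haveI := hω
  have hjm := dyadic_child_left n k
  have hjp := dyadic_child_right n k
  have hL : (0:ℝ) < 2^n := by positivity
  have hK : MeasurableSet (dyadicInterval m j) := by
    unfold dyadicInterval; exact measurableSet_Ico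
  have hKfin : σ (dyadicInterval m j) ≠ ⊤ := (dyadic_meas_lt σ m j).ne
  have hdisjK : ∀ t ∈ dyadicInterval m j, (2:ℝ)^n < |t - ((k:ℝ) + 1/2) * 2^n| := by
    intro t ht
    by_contra hc
    push_neg at hc
    have h2 := abs_le.1 hc
    exact Set.disjoint_left.1 hdisj ht
      (Set.mem_Icc.2 ⟨by linarith [h2.1], by linarith [h2.2]⟩)
  have hPpos : 0 < (ω (Ico (((k:ℝ) + 1/2) * 2^n - (2:ℝ)^n / 2)
      (((k:ℝ) + 1/2) * 2^n))).toReal := by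
    rw [← hjm]; exact ENNReal.toReal_pos hm0.ne' (dyadic_meas_lt ω _ _).ne
  have hQpos : 0 < (ω (Ico (((k:ℝ) + 1/2) * 2^n)
      (((k:ℝ) + 1/2) * 2^n + (2:ℝ)^n / 2))).toReal := by
    rw [← hjp]; exact ENNReal.toReal_pos hp0.ne' (dyadic_meas_lt ω _ _).ne
  refine main_aux σ ω (((k:ℝ) + 1/2) * 2^n) ((2:ℝ)^n) hL (dyadicInterval m j) hK hKfin
    hdisjK
    ((Real.sqrt (ω (dyadicInterval n k)).toReal)⁻¹ *
      Real.sqrt ((ω (Ico (((k:ℝ) + 1/2) * 2^n - (2:ℝ)^n / 2) (((k:ℝ) + 1/2) * 2^n))).toReal /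
        (ω (Ico (((k:ℝ) + 1/2) * 2^n) (((k:ℝ) + 1/2) * 2^n + (2:ℝ)^n / 2))).toReal))
    ((Real.sqrt (ω (dyadicInterval n k)).toReal)⁻¹ *
      Real.sqrt ((ω (Ico (((k:ℝ) + 1/2) * 2^n) (((k:ℝ) + 1/2) * 2^n + (2:ℝ)^n / 2))).toReal /
        (ω (Ico (((k:ℝ) + 1/2) * 2^n - (2:ℝ)^n / 2) (((k:ℝ) + 1/2) * 2^n))).toReal))
    (by positivity) (by positivity)
    (sqrt_balance hPpos hQpos)
    (haarFn ω n k) ?_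
  intro x
  rw [haar_decomp, hjm, hjp]
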